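/- For all positive integers t, 2^((2t+1)^2 - 1 - 4t^2) < ∑_{j=0}^{t} C((2t+1)^2, j) * 3^j. -/

import Mathlib

theorem stmt4 (t : ℕ) (ht : 0 < t) :
    2 ^ ((2 * t + 1) ^ 2 - 1 - 4 * t ^ 2) <
      ∑ j ∈ Finset.range (t + 1), Nat.choose ((2 * t + 1) ^ 2) j * 3 ^ j := by
  set n := (2 * t + 1) ^ 2 with hn
  have hexp : (2 * t + 1) ^ 2 - 1 - 4 * t ^ 2 = 4 * t := by
    have : (2 * t + 1) ^ 2 = 4 * t ^ 2 + 4 * t + 1 := by ring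
    omega
  rw [hexp]
  -- key: 16^t ≤ C(n,t) * 3^t
  have h1 : (n + 1 - t) ^ t ≤ (Nat.factorial t) * n.choose t := by
    rw [← Nat.descFactorial_eq_factorial_mul_choose]
    exact Nat.pow_sub_le_descFactorial n t
  have hkey : (16 * t) ^ t ≤ (n.choose t * 3 ^ t) * t ^ t := by
    calc (16 * t) ^ t ≤ (3 * (n + 1 - t)) ^ t := by
          apply Nat.pow_le_pow_left
          have hn' : n = 4 * t ^ 2 + 4 * t + 1 := by rw [hn]; ring
          have h2 : n + 1 - t = 4 * t ^ 2 + 3 * t + 2 := by omega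
          rw [h2]; nlinarith [sq_nonneg t, ht]
      _ = (n + 1 - t) ^ t * 3 ^ t := by rw [Nat.mul_pow, Nat.mul_comm]
      _ ≤ ((Nat.factorial t) * n.choose t) * 3 ^ t := Nat.mul_le_mul_right _ h1
      _ ≤ (t ^ t * n.choose t) * 3 ^ t :=
          Nat.mul_le_mul_right _ (Nat.mul_le_mul_right _ (Nat.factorial_le_pow t))
      _ = (n.choose t * 3 ^ t) * t ^ t := by ring
  have h16 : 16 ^ t ≤ n.choose t * 3 ^ t := by
    have htt : 0 < t ^ t := Nat.pow_pos ht
    have := hkey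
    rw [Nat.mul_pow] at this
    exact Nat.le_of_mul_le_mul_right this htt
  have hlt : n.choose t * 3 ^ t <
      ∑ j ∈ Finset.range (t + 1), Nat.choose n j * 3 ^ j := by
    apply Finset.single_lt_sum (i := t) (j := (0 : ℕ))
    · omega
    · exact Finset.self_mem_range_succ t
    · exact Finset.mem_range.mpr (by omega)
    · simp [Nat.choose_pos, Nat.one_le_iff_ne_zero]
    · intro k _ _; positivity
  calc 2 ^ (4 * t) = 16 ^ t := by rw [show (16:ℕ) = 2 ^ 4 by norm_num, ← pow_mul]
    _ ≤ n.choose t * 3 ^ t := h16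
    _ < _ := hlt
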